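/- arXiv:1807.08367 — 4 statements merged into one kernel-verified Lean document; each statement's English description precedes it below -/
import Mathlib

section
/- For any integer n ≥ 1 and any real x > arccosh(√2), we have 2 · ∑_{k=0}^{n-1} cosh²(k·x) < cosh²(n·x). -/
noncomputable def arccosh (x : ℝ) : ℝ := Real.log (x + Real.sqrt (x ^ 2 - 1))

theorem sum_cosh_sq_lt (n : ℕ) (hn : 1 ≤ n) (x : ℝ) (hx : x > arccosh (Real.sqrt 2)) :
    2 * ∑ k ∈ Finset.range n, Real.cosh (k * x) ^ 2 < Real.cosh (n * x) ^ 2 := by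
  have h2 : Real.sqrt 2 ^ 2 = 2 := Real.sq_sqrt (by norm_num)
  have hs2 : (1:ℝ) < Real.sqrt 2 := by
    nlinarith [Real.sqrt_nonneg 2]
  have harc : arccosh (Real.sqrt 2) = Real.log (Real.sqrt 2 + 1) := by
    unfold arccosh
    rw [h2]
    norm_num
  have hx0 : 0 < x := lt_trans (by rw [harc]; exact Real.log_pos (by linarith)) hx
  -- cosh (arccosh √2) = √2
  have hcarc : Real.cosh (arccosh (Real.sqrt 2)) = Real.sqrt 2 := by
    rw [harc, Real.cosh_eq, Real.exp_log (by linarith), Real.exp_neg,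
      Real.exp_log (by linarith)]
    have : (Real.sqrt 2 + 1)⁻¹ = Real.sqrt 2 - 1 :=
      inv_eq_of_mul_eq_one_right (by nlinarith)
    rw [this]; ring
  have hc : Real.sqrt 2 < Real.cosh x := by
    rw [← hcarc]
    exact Real.cosh_lt_cosh.2 (by
      rw [abs_of_nonneg (le_of_lt hx0), abs_of_nonneg]
      · exact hx
      · rw [harc]; exact Real.log_nonneg (by linarith))
  have hc2 : 2 < Real.cosh x ^ 2 := by nlinarith [Real.sqrt_nonneg 2]
  have hsx : 1 < Real.sinh x := by
    have h := Real.cosh_sq x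
    nlinarith [Real.sinh_pos_iff.2 hx0]
  -- key step inequality
  have key : ∀ m : ℕ, 1 ≤ m → 3 * Real.cosh (m * x) ^ 2 ≤ Real.cosh ((m + 1 : ℕ) * x) ^ 2 := by
    intro m hm
    have hmx : x ≤ m * x := le_mul_of_one_le_left (le_of_lt hx0) (by exact_mod_cast hm)
    have hC : Real.cosh x ≤ Real.cosh (m * x) :=
      Real.cosh_le_cosh.2 (by rw [abs_of_nonneg (le_of_lt hx0),
        abs_of_nonneg (by positivity)]; exact hmx)
    have hS : Real.sinh x ≤ Real.sinh (m * x) := Real.sinh_le_sinh.2 hmx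
    have hadd : Real.cosh ((m + 1 : ℕ) * x) =
        Real.cosh (m * x) * Real.cosh x + Real.sinh (m * x) * Real.sinh x := by
      push_cast
      rw [add_mul, one_mul, Real.cosh_add]
    rw [hadd]
    have h1 := Real.cosh_sq (m * x)
    have h2' := Real.cosh_sq x
    have hsp : 0 < Real.sinh x := lt_trans one_pos hsx
    have hCp := Real.cosh_pos (m * x)
    have hcp := Real.cosh_pos x
    have hCc : 2 < Real.cosh (m * x) * Real.cosh x := by nlinarith
    have hSs : 1 < Real.sinh (m * x) * Real.sinh x := by nlinarith
    have hprod : 2 < Real.cosh (m * x) * Real.cosh x * (Real.sinh (m * x) * Real.sinh x) := by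
      nlinarith
    nlinarith [sq_nonneg (Real.sinh (m * x) * Real.sinh x), mul_pos hCp hCp,
      mul_lt_mul_of_pos_left hc2 (mul_pos hCp hCp)]
  induction n with
  | zero => omega
  | succ n ih =>
    rcases Nat.eq_or_lt_of_le hn with h1 | h1
    · simp [← h1]
      nlinarith
    · have hn1 : 1 ≤ n := by omega
      have IH := ih hn1
      rw [Finset.sum_range_succ]
      have hk := key n hn1
      have hCpos := Real.cosh_pos ((n:ℝ) * x)
      push_cast at hk ⊢
      nlinarith
end

section
/- Fix an integer n ≥ 1 and let e(t) = 4n · arcsinh(coth t) for t > 0. Then there exists a unique t > 0 such that cosh(t) = tanh(e(t)/4) · sinh(e(t)/4). -/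
open Real Filter Set Topology

namespace TnAux

/-- coth -/
noncomputable def c (t : ℝ) : ℝ := Real.cosh t / Real.sinh t

noncomputable def u (n : ℕ) (t : ℝ) : ℝ := n * Real.arsinh (c t)

/-- the function h(x) = tanh x * sinh x -/
noncomputable def h (x : ℝ) : ℝ := Real.tanh x * Real.sinh x

noncomputable def g (n : ℕ) (t : ℝ) : ℝ := Real.cosh t - h (u n t)

lemma sinh_lt_cosh (x : ℝ) : Real.sinh x < Real.cosh x := by
  have := Real.cosh_sub_sinh x
  nlinarith [Real.exp_pos (-x)]

lemma one_lt_c {t : ℝ} (ht : 0 < t) : 1 < c t := by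
  have hs : 0 < Real.sinh t := Real.sinh_pos_iff.2 ht
  rw [c, lt_div_iff₀ hs, one_mul]
  exact sinh_lt_cosh t

lemma c_anti {a b : ℝ} (ha : 0 < a) (hab : a < b) : c b < c a := by
  have hsa : 0 < Real.sinh a := Real.sinh_pos_iff.2 ha
  have hsb : 0 < Real.sinh b := Real.sinh_pos_iff.2 (ha.trans hab)
  rw [c, c, div_lt_div_iff₀ hsb hsa]
  have : 0 < Real.sinh (b - a) := Real.sinh_pos_iff.2 (by linarith)
  rw [Real.sinh_sub] at this
  nlinarith

lemma tanh_lt_tanh {x y : ℝ} (hxy : x < y) : Real.tanh x < Real.tanh y := by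
  have hcx : 0 < Real.cosh x := Real.cosh_pos _
  have hcy : 0 < Real.cosh y := Real.cosh_pos _
  rw [Real.tanh_eq_sinh_div_cosh, Real.tanh_eq_sinh_div_cosh, div_lt_div_iff₀ hcx hcy]
  have : Real.sinh (x - y) < 0 := Real.sinh_neg_iff.2 (by linarith)
  rw [Real.sinh_sub] at this
  nlinarith

lemma tanh_pos {x : ℝ} (hx : 0 < x) : 0 < Real.tanh x := by
  have := tanh_lt_tanh hx
  rwa [Real.tanh_zero] at this

lemma h_mono {x y : ℝ} (hx : 0 < x) (hxy : x < y) : h x < h y := by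
  have h1 : 0 < Real.tanh x := tanh_pos hx
  have h2 : 0 < Real.sinh x := Real.sinh_pos_iff.2 hx
  have h3 := tanh_lt_tanh hxy
  have h4 : Real.sinh x < Real.sinh y := Real.sinh_lt_sinh.2 hxy
  exact mul_lt_mul'' h3 h4 h1.le h2.le

lemma u_pos {n : ℕ} (hn : 1 ≤ n) {t : ℝ} (ht : 0 < t) : 0 < u n t := by
  have h1 : 0 < Real.arsinh (c t) := Real.arsinh_pos_iff.2 (by linarith [one_lt_c ht])
  have hn' : (1 : ℝ) ≤ n := by exact_mod_cast hn
  calc (0:ℝ) < 1 * Real.arsinh (c t) := by linarith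
  _ ≤ n * Real.arsinh (c t) := by nlinarith

lemma u_anti {n : ℕ} (hn : 1 ≤ n) {a b : ℝ} (ha : 0 < a) (hab : a < b) : u n b < u n a := by
  have := Real.arsinh_lt_arsinh.2 (c_anti ha hab)
  have hn' : (1 : ℝ) ≤ n := by exact_mod_cast hn
  unfold u; nlinarith

lemma g_strictMono {n : ℕ} (hn : 1 ≤ n) {a b : ℝ} (ha : 0 < a) (hab : a < b) :
    g n a < g n b := by
  have h1 : Real.cosh a < Real.cosh b := by
    rw [Real.cosh_lt_cosh, abs_of_pos ha, abs_of_pos (ha.trans hab)]; exact hab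
  have h2 : h (u n b) < h (u n a) := h_mono (u_pos hn (ha.trans hab)) (u_anti hn ha hab)
  unfold g; linarith

lemma continuous_tanh : Continuous Real.tanh := by
  have : Real.tanh = fun x => Real.sinh x / Real.cosh x := funext Real.tanh_eq_sinh_div_cosh
  rw [this]
  exact Real.continuous_sinh.div Real.continuous_cosh fun x => (Real.cosh_pos x).ne'

lemma continuousOn_g (n : ℕ) : ContinuousOn (g n) (Set.Ioi 0) := by
  have hc : ContinuousOn c (Set.Ioi 0) := by
    apply ContinuousOn.div Real.continuous_cosh.continuousOn Real.continuous_sinh.continuousOn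
    intro t ht
    exact ne_of_gt (Real.sinh_pos_iff.2 ht)
  have hu : ContinuousOn (u n) (Set.Ioi 0) :=
    continuousOn_const.mul (Real.continuous_arsinh.comp_continuousOn hc)
  exact Real.continuous_cosh.continuousOn.sub
    ((continuous_tanh.comp_continuousOn hu).mul
      (Real.continuous_sinh.comp_continuousOn hu))

lemma exists_pos_g {n : ℕ} (hn : 1 ≤ n) : ∃ t, 1 ≤ t ∧ 0 < g n t := by
  refine ⟨max 1 (h (u n 1) + 1), le_max_left _ _, ?_⟩
  set t := max 1 (h (u n 1) + 1) with ht
  have h1 : (1:ℝ) ≤ t := le_max_left _ _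
  have ht0 : (0:ℝ) < t := by linarith
  have hcosh : h (u n 1) + 1 ≤ Real.cosh t := by
    calc h (u n 1) + 1 ≤ t := le_max_right _ _
    _ ≤ Real.sinh t := Real.self_le_sinh_iff.2 ht0.le
    _ ≤ Real.cosh t := (sinh_lt_cosh t).le
  have hub : h (u n t) ≤ h (u n 1) := by
    rcases eq_or_lt_of_le h1 with h | h
    · rw [← h]
    · exact (h_mono (u_pos hn ht0) (u_anti hn one_pos h)).le
  unfold g; linarith

lemma tendsto_c_atTop : Tendsto c (𝓝[>] (0:ℝ)) atTop := by
  have hs : Tendsto Real.sinh (𝓝[>] (0:ℝ)) (𝓝[>] (0:ℝ)) := by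
    apply tendsto_nhdsWithin_of_tendsto_nhds_of_eventually_within
    · have := Real.continuous_sinh.tendsto 0
      rw [Real.sinh_zero] at this
      exact this.mono_left nhdsWithin_le_nhds
    · filter_upwards [self_mem_nhdsWithin] with t ht
      exact Real.sinh_pos_iff.2 ht
  have hinv : Tendsto (fun t => (Real.sinh t)⁻¹) (𝓝[>] (0:ℝ)) atTop :=
    tendsto_inv_nhdsGT_zero.comp hs
  have hcosh : Tendsto Real.cosh (𝓝[>] (0:ℝ)) (𝓝 1) := by
    have := Real.continuous_cosh.tendsto 0
    rw [Real.cosh_zero] at this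
    exact this.mono_left nhdsWithin_le_nhds
  have := hcosh.pos_mul_atTop one_pos hinv
  refine this.congr fun t => ?_
  rw [c, div_eq_mul_inv]

lemma sinh_u_ge {n : ℕ} (hn : 1 ≤ n) {t : ℝ} (ht : 0 < t) : c t ≤ Real.sinh (u n t) := by
  have h1 : 0 ≤ Real.arsinh (c t) := Real.arsinh_nonneg_iff.2 (by linarith [one_lt_c ht])
  have hn' : (1 : ℝ) ≤ n := by exact_mod_cast hn
  have h2 : Real.arsinh (c t) ≤ u n t := by unfold u; nlinarith
  calc c t = Real.sinh (Real.arsinh (c t)) := (Real.sinh_arsinh _).symm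
  _ ≤ Real.sinh (u n t) := Real.sinh_le_sinh.2 h2

lemma exists_neg_g {n : ℕ} (hn : 1 ≤ n) : ∃ t, 0 < t ∧ t ≤ 1 ∧ g n t < 0 := by
  set K : ℝ := Real.cosh 1 / Real.tanh (u n 1) with hK
  have hev : ∀ᶠ t in 𝓝[>] (0:ℝ), K < c t := tendsto_c_atTop.eventually_gt_atTop K
  have hmem : Set.Ioo (0:ℝ) 1 ∈ 𝓝[>] (0:ℝ) :=
    Ioo_mem_nhdsGT_of_mem ⟨le_refl 0, one_pos⟩
  obtain ⟨t, htK, ht0, ht1⟩ := (hev.and hmem).exists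
  refine ⟨t, ht0, ht1.le, ?_⟩
  have htanh1 : 0 < Real.tanh (u n 1) := tanh_pos (u_pos hn one_pos)
  have htanh : Real.tanh (u n 1) < Real.tanh (u n t) := tanh_lt_tanh (u_anti hn ht0 ht1)
  have hsinh : c t ≤ Real.sinh (u n t) := sinh_u_ge hn ht0
  have hsinh0 : 0 < Real.sinh (u n t) := Real.sinh_pos_iff.2 (u_pos hn ht0)
  have hcosh : Real.cosh t ≤ Real.cosh 1 := by
    rw [Real.cosh_le_cosh, abs_of_pos ht0, abs_one]; exact ht1.le
  have hKt : Real.cosh 1 < Real.tanh (u n 1) * c t := by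
    rw [hK] at htK
    calc Real.cosh 1 = Real.tanh (u n 1) * (Real.cosh 1 / Real.tanh (u n 1)) := by
          field_simp
    _ < Real.tanh (u n 1) * c t := by
          exact mul_lt_mul_of_pos_left htK htanh1
  have hct : 0 < c t := by linarith [one_lt_c ht0]
  have : Real.cosh 1 < Real.tanh (u n t) * Real.sinh (u n t) := by
    calc Real.cosh 1 < Real.tanh (u n 1) * c t := hKt
    _ ≤ Real.tanh (u n 1) * Real.sinh (u n t) := by nlinarith
    _ ≤ Real.tanh (u n t) * Real.sinh (u n t) := by nlinarith
  unfold g h; linarith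

end TnAux

theorem exists_unique_tn (n : ℕ) (hn : 1 ≤ n) :
    ∃! t : ℝ, 0 < t ∧
      Real.cosh t =
        Real.tanh ((4 * n * Real.arsinh (Real.cosh t / Real.sinh t)) / 4) *
          Real.sinh ((4 * n * Real.arsinh (Real.cosh t / Real.sinh t)) / 4) := by
  have key : ∀ t : ℝ, (4 * (n:ℝ) * Real.arsinh (Real.cosh t / Real.sinh t)) / 4
      = TnAux.u n t := by
    intro t; unfold TnAux.u TnAux.c; ring
  simp only [key]
  have heq : ∀ t : ℝ, (Real.cosh t = Real.tanh (TnAux.u n t) * Real.sinh (TnAux.u n t))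
      ↔ TnAux.g n t = 0 := by
    intro t; unfold TnAux.g TnAux.h; constructor <;> intro h <;> linarith
  obtain ⟨a, ha0, ha1, hga⟩ := TnAux.exists_neg_g hn
  obtain ⟨b, hb1, hgb⟩ := TnAux.exists_pos_g hn
  have hab : a ≤ b := ha1.trans hb1
  have hsub : Set.Icc a b ⊆ Set.Ioi (0:ℝ) := fun x hx => lt_of_lt_of_le ha0 hx.1
  have hcont := (TnAux.continuousOn_g n).mono hsub
  have h0 : (0:ℝ) ∈ Set.Icc (TnAux.g n a) (TnAux.g n b) := ⟨hga.le, hgb.le⟩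
  obtain ⟨t, htmem, hgt⟩ := intermediate_value_Icc hab hcont h0
  have ht0 : 0 < t := lt_of_lt_of_le ha0 htmem.1
  refine ⟨t, ⟨ht0, (heq t).2 hgt⟩, ?_⟩
  rintro y ⟨hy0, hy⟩
  have hgy : TnAux.g n y = 0 := (heq y).1 hy
  by_contra hne
  rcases lt_or_gt_of_ne hne with h | h
  · have := TnAux.g_strictMono hn hy0 h
    rw [hgy, hgt] at this; exact lt_irrefl 0 this
  · have := TnAux.g_strictMono hn ht0 h
    rw [hgy, hgt] at this; exact lt_irrefl 0 this
end

section
/- For any integer n ≥ 1 and any real e with e/(4n) > arccosh(√2), we have ∑_{j=2}^{2n} cosh²((n+1−j)·e/(4n)) < cosh²(e/4). -/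
lemma cosh_arccosh_sqrt2 : Real.cosh (arccosh (Real.sqrt 2)) = Real.sqrt 2 := by
  have h2 : (Real.sqrt 2) ^ 2 = 2 := Real.sq_sqrt (by norm_num)
  have hs : Real.sqrt 2 + 1 > 0 := by positivity
  have h1 : arccosh (Real.sqrt 2) = Real.log (Real.sqrt 2 + 1) := by
    unfold arccosh; rw [h2]; norm_num
  have hinv : (Real.sqrt 2 + 1)⁻¹ = Real.sqrt 2 - 1 :=
    inv_eq_of_mul_eq_one_right (by nlinarith)
  rw [h1, Real.cosh_eq, Real.exp_log hs, Real.exp_neg, Real.exp_log hs, hinv]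
  ring

lemma arccosh_sqrt2_nonneg : 0 ≤ arccosh (Real.sqrt 2) := by
  have h2 : (Real.sqrt 2) ^ 2 = 2 := Real.sq_sqrt (by norm_num)
  have h1 : arccosh (Real.sqrt 2) = Real.log (Real.sqrt 2 + 1) := by
    unfold arccosh; rw [h2]; norm_num
  rw [h1]
  apply Real.log_nonneg
  nlinarith [Real.sqrt_nonneg 2]

lemma key_ineq (x : ℝ) (hx : arccosh (Real.sqrt 2) < x) (n : ℕ) :
    2 * ∑ k ∈ Finset.range n, Real.cosh (k * x) ^ 2 < Real.cosh (n * x) ^ 2 := by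
  have hx0 : 0 < x := lt_of_le_of_lt arccosh_sqrt2_nonneg hx
  have hc : Real.sqrt 2 < Real.cosh x := by
    rw [← cosh_arccosh_sqrt2, Real.cosh_lt_cosh,
      abs_of_nonneg arccosh_sqrt2_nonneg, abs_of_pos hx0]
    exact hx
  have hc2 : 2 < Real.cosh x ^ 2 := by
    nlinarith [Real.sqrt_nonneg 2, Real.sq_sqrt (show (0:ℝ) ≤ 2 by norm_num)]
  induction n with
  | zero => simp
  | succ n ih =>
    rw [Finset.sum_range_succ]
    rcases Nat.eq_zero_or_pos n with h0 | hpos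
    · subst h0; simp
      nlinarith [Real.sinh_sq x]
    · push_cast
      have hn1 : (1:ℝ) ≤ n := by exact_mod_cast hpos
      set C := Real.cosh ((n:ℝ) * x) with hCdef
      set S := Real.sinh ((n:ℝ) * x) with hSdef
      set c := Real.cosh x
      set s := Real.sinh x
      have hC : 1 ≤ C := Real.one_le_cosh _
      have hS2 : S ^ 2 = C ^ 2 - 1 := Real.sinh_sq _
      have hs2 : s ^ 2 = c ^ 2 - 1 := Real.sinh_sq x
      have hsp : 0 < s := Real.sinh_pos_iff.mpr hx0
      have hsx : 1 < s := by nlinarith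
      have hSs : s ≤ S := Real.sinh_le_sinh.mpr (by nlinarith)
      have hS1 : 1 < S := lt_of_lt_of_le hsx hSs
      have hadd : ((n:ℝ)+1) * x = (n:ℝ)*x + x := by ring
      rw [hadd, Real.cosh_add, ← hCdef, ← hSdef]
      have f1 : 2*C^2 ≤ C^2 * c^2 := by nlinarith
      have f2 : C^2 - 1 ≤ S^2 * s^2 := by nlinarith
      have hc1 : 1 < c := by
        have hsq : (1:ℝ) < Real.sqrt 2 := by
          nlinarith [Real.sq_sqrt (show (0:ℝ) ≤ 2 by norm_num), Real.sqrt_nonneg 2]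
        linarith
      have hCc : 1 ≤ C*c := by nlinarith
      have hSsp : 1 ≤ S*s := by nlinarith
      have hm : (1:ℝ)*1 ≤ (C*c)*(S*s) :=
        mul_le_mul hCc hSsp zero_le_one (le_trans zero_le_one hCc)
      have f3 : 1 ≤ 2*C*c*S*s := by nlinarith [hm]
      have expand : (C*c + S*s)^2 = C^2*c^2 + 2*C*c*S*s + S^2*s^2 := by ring
      linarith [ih, f1, f2, f3, expand.ge, expand.le]

lemma sum_ident (x : ℝ) (n : ℕ) (hn : 1 ≤ n) :
    ∑ j ∈ Finset.Icc 2 (2*n), Real.cosh (((n:ℝ)+1-j) * x) ^ 2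
      = 2 * ∑ k ∈ Finset.range n, Real.cosh (k * x) ^ 2 - 1 := by
  set f : ℕ → ℝ := fun k => Real.cosh (k * x) ^ 2 with hf
  have h1 : ∑ j ∈ Finset.Icc 2 (2*n), Real.cosh (((n:ℝ)+1-j) * x) ^ 2
      = ∑ i ∈ Finset.range (2*n - 1), Real.cosh (((n:ℝ)+1-(2+i)) * x) ^ 2 := by
    rw [← Finset.Ico_add_one_right_eq_Icc, Finset.sum_Ico_eq_sum_range]
    apply Finset.sum_congr rfl
    intro i _; push_cast; try ring_nf
  rw [h1]
  have h2 : 2*n - 1 = n + (n-1) := by omega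
  rw [h2, Finset.sum_range_add]
  have h3 : ∑ i ∈ Finset.range n, Real.cosh (((n:ℝ)+1-(2+i)) * x) ^ 2
      = ∑ k ∈ Finset.range n, f k := by
    rw [← Finset.sum_range_reflect f n]
    apply Finset.sum_congr rfl
    intro i hi
    rw [Finset.mem_range] at hi
    have hcast : ((n-1-i : ℕ) : ℝ) = (n:ℝ) - 1 - i := by
      have h' : n - 1 - i = n - (1+i) := by omega
      rw [h', Nat.cast_sub (by omega)]; push_cast; ring
    simp only [hf, hcast]
    ring_nf
  have h4 : ∑ i ∈ Finset.range (n-1), Real.cosh (((n:ℝ)+1-(2+((n+i : ℕ):ℝ))) * x) ^ 2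
      = ∑ i ∈ Finset.range (n-1), f (i+1) := by
    apply Finset.sum_congr rfl
    intro i _
    have e1 : ((n:ℝ)+1-(2+((n+i : ℕ):ℝ))) * x = -(((i:ℝ)+1) * x) := by push_cast; ring
    simp only [hf]
    rw [e1, Real.cosh_neg]
    push_cast
    ring_nf
  have h5 : ∑ i ∈ Finset.range (n-1), f (i+1) = (∑ k ∈ Finset.range n, f k) - 1 := by
    have hsucc : ∑ k ∈ Finset.range ((n-1)+1), f k
        = ∑ i ∈ Finset.range (n-1), f (i+1) + f 0 := Finset.sum_range_succ' f (n-1)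
    have hnn : (n-1)+1 = n := by omega
    have hf0 : f 0 = 1 := by simp [hf]
    rw [hnn, hf0] at hsucc
    linarith
  rw [h3, h4, h5]
  ring

theorem sum_cosh_sq_lt_cosh_sq (n : ℕ) (hn : 1 ≤ n) (e : ℝ)
    (he : e / (4 * n) > arccosh (Real.sqrt 2)) :
    ∑ j ∈ Finset.Icc 2 (2 * n), Real.cosh (((n : ℝ) + 1 - j) * e / (4 * n)) ^ 2 <
      Real.cosh (e / 4) ^ 2 := by
  have hn0 : (0:ℝ) < n := by exact_mod_cast hn
  set x := e / (4 * n) with hxdef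
  have hterm : ∀ j : ℕ, ((n : ℝ) + 1 - j) * e / (4 * n) = ((n : ℝ) + 1 - j) * x := by
    intro j; rw [hxdef, mul_div_assoc]
  have hend : e / 4 = (n:ℝ) * x := by
    rw [hxdef]; field_simp
  simp only [hterm]
  rw [hend, sum_ident x n hn]
  have := key_ineq x he n
  linarith
end

section
/- Let t_n be the unique positive solution of cosh(t) = tanh(e(t)/4)·sinh(e(t)/4) where e(t) = 4n·arcsinh(coth t). Then t_n = n·log(1+√2) + o(1) as n → ∞. -/
open Real Filter

set_option maxHeartbeats 4000000

private lemma arsinh_one_eq : Real.arsinh 1 = Real.log (1 + Real.sqrt 2) := by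
  rw [Real.arsinh]
  norm_num

private lemma sinh_ge_self {x : ℝ} (hx : 0 ≤ x) : x ≤ Real.sinh x := by
  rcases eq_or_lt_of_le hx with h | h
  · simp [← h]
  · exact (Real.self_lt_sinh_iff.mpr h).le

private lemma arsinh_lip {x : ℝ} (hx : 1 ≤ x) :
    Real.arsinh x ≤ Real.arsinh 1 + (x - 1) := by
  have h1 : Real.sinh (Real.arsinh 1 + (x - 1)) = Real.cosh (x - 1) + Real.sqrt 2 * Real.sinh (x - 1) := by
    rw [Real.sinh_add, Real.sinh_arsinh, Real.cosh_arsinh]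
    norm_num
  have h2 : x ≤ Real.sinh (Real.arsinh 1 + (x - 1)) := by
    rw [h1]
    have hc : 1 ≤ Real.cosh (x - 1) := Real.one_le_cosh _
    have hs : x - 1 ≤ Real.sinh (x - 1) := sinh_ge_self (by linarith)
    have h2' : (1 : ℝ) ≤ Real.sqrt 2 := by
      rw [show (1:ℝ) = Real.sqrt 1 by simp]
      exact Real.sqrt_le_sqrt (by norm_num)
    nlinarith [Real.sinh_nonneg_iff.mpr (show (0:ℝ) ≤ x - 1 by linarith)]
  calc Real.arsinh x ≤ Real.arsinh (Real.sinh (Real.arsinh 1 + (x - 1))) :=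
        Real.arsinh_le_arsinh.mpr h2
    _ = Real.arsinh 1 + (x - 1) := Real.arsinh_sinh _

private lemma cosh_mono_of_nonneg {x y : ℝ} (hx : 0 ≤ x) (hxy : x ≤ y) :
    Real.cosh x ≤ Real.cosh y := by
  rw [Real.cosh_le_cosh, abs_of_nonneg hx, abs_of_nonneg (hx.trans hxy)]
  exact hxy

private lemma one_le_sinh_one : (1:ℝ) ≤ Real.sinh 1 := by
  rw [Real.sinh_eq]
  have he : (2.7182818283 : ℝ) < Real.exp 1 := Real.exp_one_gt_d9
  have hmul : Real.exp (-1:ℝ) * Real.exp 1 = 1 := by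
    rw [← Real.exp_add]; simp
  have he2 : Real.exp (-1 : ℝ) ≤ 1/2 := by nlinarith [Real.exp_pos (-1:ℝ)]
  linarith

theorem tn_asymptotic (t : ℕ → ℝ)
    (ht : ∀ n : ℕ, 1 ≤ n → 0 < t n ∧
      Real.cosh (t n) =
        Real.tanh ((4 * n * Real.arsinh (Real.cosh (t n) / Real.sinh (t n))) / 4) *
          Real.sinh ((4 * n * Real.arsinh (Real.cosh (t n) / Real.sinh (t n))) / 4)) :
    Filter.Tendsto (fun n : ℕ => t n - n * Real.log (1 + Real.sqrt 2))
      Filter.atTop (nhds 0) := by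
  set c : ℝ := Real.log (1 + Real.sqrt 2) with hcdef
  have hc1 : Real.arsinh 1 = c := arsinh_one_eq
  have hlog2 : (0.6931471803 : ℝ) < Real.log 2 := Real.log_two_gt_d9
  have hc2 : Real.log 2 ≤ c := by
    apply Real.log_le_log (by norm_num)
    nlinarith [Real.sq_sqrt (by norm_num : (2:ℝ) ≥ 0), Real.sqrt_nonneg 2]
  have hcpos : 0 < c := by linarith
  have hsinhc : Real.sinh c = 1 := by rw [← hc1, Real.sinh_arsinh]
  have hcoshc : Real.cosh c = Real.sqrt 2 := by
    rw [← hc1, Real.cosh_arsinh]; norm_num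
  have hsqrt2 : (1:ℝ) < Real.sqrt 2 := by
    nlinarith [Real.sq_sqrt (by norm_num : (2:ℝ) ≥ 0), Real.sqrt_nonneg 2]
  -- key per-n bounds
  have key : ∀ n : ℕ, 5 ≤ n →
      -(2 * Real.exp (-(c * n))) ≤ t n - n * c ∧
      t n - n * c ≤ 256 * (n * Real.exp (-(2 * c * n))) := by
    intro n hn5
    obtain ⟨hT, heq⟩ := ht n (by omega)
    set T := t n with hTdef
    have hn1 : (1:ℝ) ≤ (n:ℝ) := by exact_mod_cast Nat.one_le_iff_ne_zero.mpr (by omega)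
    have hn5' : (5:ℝ) ≤ (n:ℝ) := by exact_mod_cast hn5
    set A : ℝ := Real.arsinh (Real.cosh T / Real.sinh T) with hAdef
    have hE4 : (4 * (n:ℝ) * A) / 4 = n * A := by ring
    rw [hE4] at heq
    set E : ℝ := (n:ℝ) * A with hEdef
    clear_value E
    clear_value A
    clear_value T
    have hsT : 0 < Real.sinh T := Real.sinh_pos_iff.mpr hT
    have hcT : 0 < Real.cosh T := Real.cosh_pos T
    have hcs : Real.sinh T < Real.cosh T := by
      nlinarith [Real.cosh_sub_sinh T, Real.exp_pos (-T)]
    have hx1 : 1 < Real.cosh T / Real.sinh T := (one_lt_div hsT).mpr hcs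
    have hAc : c < A := by
      rw [← hc1, hAdef]; exact Real.arsinh_strictMono hx1
    have hEnc : (n:ℝ) * c ≤ E := by
      rw [hEdef]; nlinarith
    have hncc : c ≤ (n:ℝ) * c := by nlinarith
    have hEpos : 0 < E := lt_of_lt_of_le (show (0:ℝ) < (n:ℝ)*c by nlinarith) hEnc
    have hsE : 0 < Real.sinh E := Real.sinh_pos_iff.mpr hEpos
    have hcE : 0 < Real.cosh E := Real.cosh_pos E
    -- cosh E - cosh T = 1 / cosh E
    have h7 : Real.cosh E - Real.cosh T = 1 / Real.cosh E := by
      rw [heq, Real.tanh_eq_sinh_div_cosh]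
      field_simp
      nlinarith [Real.cosh_sq_sub_sinh_sq E]
    have hTE : T < E := by
      have : Real.cosh T < Real.cosh E := by
        have := one_div_pos.mpr hcE; linarith
      have h := Real.cosh_lt_cosh.mp this
      rwa [abs_of_pos hT, abs_of_pos hEpos] at h
    -- tanh E ≥ 1/√2  (since E ≥ c)
    have htanh : 1 / Real.sqrt 2 ≤ Real.sinh E / Real.cosh E := by
      rw [div_le_div_iff₀ (by positivity) hcE]
      have hsub : 0 ≤ Real.sinh (E - c) := Real.sinh_nonneg_iff.mpr (by linarith)
      rw [Real.sinh_sub, hsinhc, hcoshc] at hsub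
      linarith
    -- lower bound for cosh T, hence for T
    have hexpnc2 : (2:ℝ) ≤ Real.exp ((n:ℝ) * c) := by
      calc (2:ℝ) = Real.exp (Real.log 2) := (Real.exp_log (by norm_num)).symm
        _ ≤ Real.exp ((n:ℝ) * c) := Real.exp_le_exp.mpr (by nlinarith)
    have hsinhnc : Real.exp ((n:ℝ) * c) / 4 ≤ Real.sinh ((n:ℝ) * c) := by
      have := Real.exp_pos (-((n:ℝ) * c))
      have hle1 : Real.exp (-((n:ℝ) * c)) ≤ 1 := Real.exp_le_one_iff.mpr (by nlinarith)
      rw [Real.sinh_eq]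
      rw [Real.exp_neg] at hle1 ⊢
      nlinarith [Real.exp_pos ((n:ℝ) * c)]
    have hcoshT_lb : Real.exp ((n:ℝ) * c) / 8 ≤ Real.cosh T := by
      have hsEnc : Real.sinh ((n:ℝ) * c) ≤ Real.sinh E := Real.sinh_le_sinh.mpr hEnc
      have h1 : 1 / Real.sqrt 2 * Real.sinh ((n:ℝ) * c) ≤ Real.tanh E * Real.sinh E := by
        rw [Real.tanh_eq_sinh_div_cosh]
        have h1s : (0:ℝ) < 1 / Real.sqrt 2 := by positivity
        have : Real.sinh ((n:ℝ) * c) ≤ Real.sinh E := hsEnc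
        nlinarith [Real.sinh_nonneg_iff.mpr (show (0:ℝ) ≤ (n:ℝ)*c by nlinarith)]
      have hhalf : (1:ℝ)/2 ≤ 1 / Real.sqrt 2 := by
        rw [div_le_div_iff₀ (by norm_num) (by positivity)]
        nlinarith [Real.sq_sqrt (by norm_num : (2:ℝ) ≥ 0), Real.sqrt_nonneg 2]
      have hsnc_pos : 0 < Real.sinh ((n:ℝ) * c) := Real.sinh_pos_iff.mpr (by nlinarith)
      calc Real.exp ((n:ℝ) * c) / 8 = (1/2) * (Real.exp ((n:ℝ)*c)/4) := by ring
        _ ≤ (1 / Real.sqrt 2) * Real.sinh ((n:ℝ) * c) := by nlinarith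
        _ ≤ Real.tanh E * Real.sinh E := h1
        _ = Real.cosh T := heq.symm
    have hcosh_le_exp : Real.cosh T ≤ Real.exp T := by
      linarith [Real.cosh_add_sinh T, hsT]
    have hT_lb : (n:ℝ) * c - Real.log 8 ≤ T := by
      have h1 : Real.exp ((n:ℝ) * c - Real.log 8) ≤ Real.exp T := by
        rw [Real.exp_sub, Real.exp_log (by norm_num)]
        calc Real.exp ((n:ℝ)*c) / 8 ≤ Real.cosh T := hcoshT_lb
          _ ≤ Real.exp T := hcosh_le_exp
      exact Real.exp_le_exp.mp h1
    have hlog8 : Real.log 8 = 3 * Real.log 2 := by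
      rw [show (8:ℝ) = 2 ^ (3:ℕ) by norm_num, Real.log_pow]; push_cast; ring
    have hT1 : (1:ℝ) ≤ T := by
      have : (5:ℝ) * Real.log 2 ≤ (n:ℝ) * c := by nlinarith
      rw [hlog8] at hT_lb
      nlinarith
    -- E - T ≤ 2 exp(-(n c))
    have hsT1 : (1:ℝ) ≤ Real.sinh T := by
      have h1 : Real.sinh 1 ≤ Real.sinh T := Real.sinh_le_sinh.mpr hT1
      linarith [one_le_sinh_one]
    have hdnonneg : 0 ≤ E - T := by linarith
    have h8 : Real.sinh T * (E - T) ≤ 1 / Real.cosh E := by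
      rw [← h7]
      have hadd : Real.cosh E = Real.cosh T * Real.cosh (E - T) + Real.sinh T * Real.sinh (E - T) := by
        have h := Real.cosh_add T (E - T)
        rwa [show T + (E - T) = E by ring] at h
      have h9 : Real.sinh T * (E - T) ≤ Real.sinh T * Real.sinh (E - T) :=
        mul_le_mul_of_nonneg_left (sinh_ge_self hdnonneg) hsT.le
      have h10 : Real.cosh T * 1 ≤ Real.cosh T * Real.cosh (E - T) :=
        mul_le_mul_of_nonneg_left (Real.one_le_cosh (E - T)) hcT.le
      linarith
    have hcE_lb : Real.exp ((n:ℝ) * c) / 2 ≤ Real.cosh E := by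
      have h1 : Real.cosh ((n:ℝ)*c) ≤ Real.cosh E :=
        cosh_mono_of_nonneg (mul_nonneg (Nat.cast_nonneg n) hcpos.le) hEnc
      have h2 : Real.exp ((n:ℝ)*c) / 2 ≤ Real.cosh ((n:ℝ)*c) := by
        rw [Real.cosh_eq]
        linarith [Real.exp_pos (-((n:ℝ)*c))]
      linarith
    have hET : E - T ≤ 2 * Real.exp (-(c * (n:ℝ))) := by
      have h1 : 1 / Real.cosh E ≤ 2 * Real.exp (-(c * (n:ℝ))) := by
        have h2 := one_div_le_one_div_of_le (show (0:ℝ) < Real.exp ((n:ℝ)*c)/2 from by positivity) hcE_lb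
        have heq2 : 1 / (Real.exp ((n:ℝ)*c) / 2) = 2 * Real.exp (-(c * (n:ℝ))) := by
          rw [one_div_div, Real.exp_neg, mul_comm c (n:ℝ), div_eq_mul_inv, mul_comm]
        rw [heq2] at h2
        exact h2
      linarith [h8, h1, mul_le_mul_of_nonneg_right hsT1 hdnonneg]
    -- n (A - c) ≤ 256 n exp(-2nc)
    have hsinhT_lb : Real.exp T / 4 ≤ Real.sinh T := by
      have hle1 : Real.exp (-T) ≤ 1 := Real.exp_le_one_iff.mpr (by linarith)
      have h2 : (2:ℝ) ≤ Real.exp T := by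
        calc (2:ℝ) = Real.exp (Real.log 2) := (Real.exp_log (by norm_num)).symm
          _ ≤ Real.exp T := Real.exp_le_exp.mpr (by
              have := Real.log_le_sub_one_of_pos (show (0:ℝ) < 2 by norm_num)
              linarith)
      rw [Real.sinh_eq]
      linarith
    have hAub : A - c ≤ 4 * Real.exp (-(2 * T)) := by
      have h1 : A ≤ c + (Real.cosh T / Real.sinh T - 1) := by
        rw [hAdef, ← hc1]
        exact arsinh_lip hx1.le
      have h2 : Real.cosh T / Real.sinh T - 1 = Real.exp (-T) / Real.sinh T := by
        field_simp
        exact Real.cosh_sub_sinh T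
      have h3 : Real.exp (-T) / Real.sinh T ≤ Real.exp (-T) * (4 * Real.exp (-T)) := by
        rw [div_le_iff₀ hsT]
        have h4 : Real.exp (-T) * Real.exp T = 1 := by
          rw [← Real.exp_add]; simp
        have h6 : Real.exp (-T) * (4 * Real.exp (-T)) * (Real.exp T / 4) ≤
            Real.exp (-T) * (4 * Real.exp (-T)) * Real.sinh T :=
          mul_le_mul_of_nonneg_left hsinhT_lb (by positivity)
        have h7' : Real.exp (-T) * (4 * Real.exp (-T)) * (Real.exp T / 4) = Real.exp (-T) := by
          have hr : Real.exp (-T) * (4 * Real.exp (-T)) * (Real.exp T / 4) =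
              (Real.exp (-T) * Real.exp T) * Real.exp (-T) := by ring
          rw [hr, h4, one_mul]
        linarith
      have h5 : Real.exp (-T) * (4 * Real.exp (-T)) = 4 * Real.exp (-(2*T)) := by
        rw [show -(2*T) = -T + -T by ring, Real.exp_add]; ring
      rw [h5, ← h2] at h3
      linarith [h1, h3]
    have hexpT : Real.exp (-(2 * T)) ≤ 64 * Real.exp (-(2 * c * n)) := by
      have h1 : Real.exp (-(2*T)) ≤ Real.exp (-(2*((n:ℝ)*c - Real.log 8))) :=
        Real.exp_le_exp.mpr (by linarith)
      have h2 : Real.exp (-(2*((n:ℝ)*c - Real.log 8))) = Real.exp (2 * Real.log 8) * Real.exp (-(2*c*(n:ℝ))) := by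
        rw [← Real.exp_add]; congr 1; ring
      have h3 : Real.exp (2 * Real.log 8) = 64 := by
        rw [show (2:ℝ) * Real.log 8 = Real.log (8^(2:ℕ)) by rw [Real.log_pow]; push_cast; ring]
        rw [Real.exp_log (by norm_num)]; norm_num
      calc Real.exp (-(2*T)) ≤ Real.exp (2 * Real.log 8) * Real.exp (-(2*c*(n:ℝ))) := by
            rw [← h2]; exact h1
        _ = 64 * Real.exp (-(2*c*(n:ℝ))) := by rw [h3]
    constructor
    · -- lower bound
      have : T - (n:ℝ) * c = (T - E) + (n:ℝ) * (A - c) := by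
        rw [hEdef]; ring
      rw [this]
      have h1 : 0 ≤ (n:ℝ) * (A - c) := mul_nonneg (Nat.cast_nonneg n) (by linarith)
      linarith [hET]
    · -- upper bound
      have : T - (n:ℝ) * c = (T - E) + (n:ℝ) * (A - c) := by
        rw [hEdef]; ring
      rw [this]
      have h1 : (n:ℝ) * (A - c) ≤ (n:ℝ) * (4 * Real.exp (-(2*T))) :=
        mul_le_mul_of_nonneg_left hAub (by positivity)
      have h2 : (n:ℝ) * (4 * Real.exp (-(2*T))) ≤ (n:ℝ) * (4 * (64 * Real.exp (-(2*c*n)))) := by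
        have := mul_le_mul_of_nonneg_left hexpT (show (0:ℝ) ≤ 4 by norm_num)
        exact mul_le_mul_of_nonneg_left this (by positivity)
      linarith [hTE]
  -- squeeze
  have hnat : Tendsto (fun n : ℕ => (n : ℝ)) atTop atTop := tendsto_natCast_atTop_atTop
  have hlo : Tendsto (fun n : ℕ => -(2 * Real.exp (-(c * n)))) atTop (nhds 0) := by
    have h1 : Tendsto (fun n : ℕ => c * (n:ℝ)) atTop atTop := hnat.const_mul_atTop hcpos
    have h2 : Tendsto (fun n : ℕ => -(c * (n:ℝ))) atTop atBot := tendsto_neg_atTop_atBot.comp h1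
    have h3 : Tendsto (fun n : ℕ => Real.exp (-(c * (n:ℝ)))) atTop (nhds 0) :=
      Real.tendsto_exp_atBot.comp h2
    have h4 := (h3.const_mul (2:ℝ)).neg
    simpa using h4
  have hhi : Tendsto (fun n : ℕ => 256 * ((n:ℝ) * Real.exp (-(2 * c * n)))) atTop (nhds 0) := by
    have hb : (0:ℝ) < 2 * c := by linarith
    have h1 : Tendsto (fun x : ℝ => x ^ (1:ℝ) * Real.exp (-(2*c) * x)) atTop (nhds 0) :=
      tendsto_rpow_mul_exp_neg_mul_atTop_nhds_zero 1 (2*c) hb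
    have h2 : Tendsto (fun n : ℕ => ((n:ℝ)) ^ (1:ℝ) * Real.exp (-(2*c) * (n:ℝ))) atTop (nhds 0) :=
      h1.comp hnat
    have h3 := h2.const_mul (256:ℝ)
    rw [mul_zero] at h3
    apply h3.congr
    intro n
    rw [Real.rpow_one]
    ring_nf
  apply tendsto_of_tendsto_of_tendsto_of_le_of_le' hlo hhi
  · filter_upwards [eventually_ge_atTop 5] with n hn
    exact (key n hn).1
  · filter_upwards [eventually_ge_atTop 5] with n hn
    exact (key n hn).2
end
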